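/- Let A be a C*-algebra, G a compact group acting on A by α, and π a finite-dimensional unitary representation of G. With A₂(π) as above, for m, n ∈ A₂(π) the product m* n lies in the fixed-point algebra of the action g ↦ (α_g ⊗ Ad π(g)) on A ⊗ B(H_π), and the span of such products m* n is a two-sided ideal of that fixed-point algebra. -/

import Mathlib

open scoped Matrix

section SpectralSubspaceAux

private lemma quadCollapseAux {A : Type*} [AddCommGroup A] [Module ℂ A] {d : ℕ}
    (c e : Fin d → Fin d → ℂ) (i j : Fin d)
    (hc : ∀ a, ∑ l, c l a = if i = a then 1 else 0)
    (he : ∀ b, ∑ k, e k b = if j = b then 1 else 0)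
    (w : Fin d → Fin d → A) :
    ∑ l, ∑ k, ∑ a, ∑ b, (c l a * e k b) • w a b = w i j := by
  have step1 : ∀ l, ∑ k, ∑ a, ∑ b, (c l a * e k b) • w a b = ∑ a, c l a • w a j := by
    intro l
    rw [Finset.sum_comm]
    refine Finset.sum_congr rfl fun a _ => ?_
    rw [Finset.sum_comm]
    have h1 : ∀ b, ∑ k, (c l a * e k b) • w a b
        = (c l a * if j = b then 1 else 0) • w a b := by
      intro b
      rw [← Finset.sum_smul, ← Finset.mul_sum, he]
    simp only [h1, mul_ite, mul_one, mul_zero, ite_smul, zero_smul]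
    simp
  simp only [step1]
  rw [Finset.sum_comm]
  have h2 : ∀ a, ∑ l, c l a • w a j = (if i = a then (1:ℂ) else 0) • w a j := by
    intro a
    rw [← Finset.sum_smul, hc]
  simp only [h2, ite_smul, one_smul, zero_smul]
  simp

private lemma collapsePAux {A : Type*} [AddCommGroup A] [Module ℂ A] {d : ℕ}
    (f : Fin d → Fin d → Fin d → ℂ) (e : Fin d → ℂ) (w : Fin d → Fin d → Fin d → A)
    (hf : ∀ c a, ∑ p, f p c a = if a = c then 1 else 0) :
    ∑ p, ∑ c, ∑ b, ∑ a, (f p c a * e b) • w c b a = ∑ b, ∑ a, e b • w a b a := by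
  rw [Finset.sum_comm]
  have reorder : ∑ c, ∑ p, ∑ b, ∑ a, (f p c a * e b) • w c b a
      = ∑ c, ∑ b, ∑ a, ∑ p, (f p c a * e b) • w c b a :=
    Finset.sum_congr rfl fun c _ =>
      (Finset.sum_comm ..).trans (Finset.sum_congr rfl fun b _ => Finset.sum_comm ..)
  rw [reorder]
  have h1 : ∀ c b a, ∑ p, (f p c a * e b) • w c b a
      = ((if a = c then (1:ℂ) else 0) * e b) • w c b a := by
    intro c b a
    rw [← Finset.sum_smul, ← Finset.sum_mul, hf]
  simp only [h1, ite_mul, one_mul, zero_mul, ite_smul, zero_smul]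
  simp only [Finset.sum_ite_eq', Finset.mem_univ, if_true]
  exact Finset.sum_comm ..

private lemma rev3Aux {M : Type*} [AddCommMonoid M] {d : ℕ} (f : Fin d → Fin d → Fin d → M) :
    ∑ p, ∑ b, ∑ a, f p b a = ∑ a, ∑ b, ∑ p, f p b a := by
  rw [Finset.sum_comm]
  refine (Finset.sum_congr rfl fun b _ => Finset.sum_comm ..).trans ?_
  rw [Finset.sum_comm]

variable {G A : Type*} [Group G] [NonUnitalCStarAlgebra A]
  {d : ℕ} (π : G →* Matrix.unitaryGroup (Fin d) ℂ) (α : G → (A ≃⋆ₐ[ℂ] A))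

private lemma hU1Aux (g : G) (i a : Fin d) :
    ∑ l, (π g : Matrix (Fin d) (Fin d) ℂ) i l * star ((π g : Matrix (Fin d) (Fin d) ℂ) a l)
      = if i = a then 1 else 0 := by
  have h := (π g).2
  rw [Unitary.mem_iff] at h
  simpa [Matrix.mul_apply, Matrix.star_apply, Matrix.one_apply] using
    congrFun (congrFun h.2 i) a

private lemma hU2Aux (g : G) (a l : Fin d) :
    ∑ i, star ((π g : Matrix (Fin d) (Fin d) ℂ) i a) * (π g : Matrix (Fin d) (Fin d) ℂ) i l
      = if a = l then 1 else 0 := by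
  have h := (π g).2
  rw [Unitary.mem_iff] at h
  simpa [Matrix.mul_apply, Matrix.star_apply, Matrix.one_apply] using
    congrFun (congrFun h.1 a) l

private lemma hU3Aux (g : G) (b k : Fin d) :
    ∑ j, (π g : Matrix (Fin d) (Fin d) ℂ) j b * star ((π g : Matrix (Fin d) (Fin d) ℂ) j k)
      = if b = k then 1 else 0 := by
  calc ∑ j, (π g : Matrix (Fin d) (Fin d) ℂ) j b * star ((π g : Matrix (Fin d) (Fin d) ℂ) j k)
      = star (∑ j, star ((π g : Matrix (Fin d) (Fin d) ℂ) j b) *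
          (π g : Matrix (Fin d) (Fin d) ℂ) j k) := by
        simp [star_sum, mul_comm]
    _ = if b = k then 1 else 0 := by rw [hU2Aux π g b k]; split <;> simp

private lemma hU4Aux (g : G) (j b : Fin d) :
    ∑ k, star ((π g : Matrix (Fin d) (Fin d) ℂ) j k) * (π g : Matrix (Fin d) (Fin d) ℂ) b k
      = if j = b then 1 else 0 := by
  calc ∑ k, star ((π g : Matrix (Fin d) (Fin d) ℂ) j k) * (π g : Matrix (Fin d) (Fin d) ℂ) b k
      = star (∑ k, (π g : Matrix (Fin d) (Fin d) ℂ) j k *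
          star ((π g : Matrix (Fin d) (Fin d) ℂ) b k)) := by
        simp [star_sum, mul_comm]
    _ = if j = b then 1 else 0 := by rw [hU1Aux π g j b]; split <;> simp

private lemma expandStarMulAux (g : G) (m n : Matrix (Fin d) (Fin d) A)
    (hm : ∀ (g : G) (i j : Fin d), α g (m i j)
      = ∑ l, (π g : Matrix (Fin d) (Fin d) ℂ) l j • m i l)
    (hn : ∀ (g : G) (i j : Fin d), α g (n i j)
      = ∑ l, (π g : Matrix (Fin d) (Fin d) ℂ) l j • n i l)
    (l k : Fin d) :
    α g ((mᴴ * n) l k) = ∑ a, ∑ b,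
      (star ((π g : Matrix (Fin d) (Fin d) ℂ) a l) * (π g : Matrix (Fin d) (Fin d) ℂ) b k)
        • (mᴴ * n) a b := by
  have L : α g ((mᴴ * n) l k) = ∑ p, ∑ b, ∑ a,
      ((π g : Matrix (Fin d) (Fin d) ℂ) b k * star ((π g : Matrix (Fin d) (Fin d) ℂ) a l))
        • (star (m p a) * n p b) := by
    simp only [Matrix.mul_apply, Matrix.conjTranspose_apply, map_sum, map_mul, map_star,
      hm, hn, star_sum, star_smul, Finset.sum_mul, Finset.mul_sum, smul_mul_assoc,
      mul_smul_comm, smul_smul, Finset.smul_sum]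
  have R : (∑ a, ∑ b,
      (star ((π g : Matrix (Fin d) (Fin d) ℂ) a l) * (π g : Matrix (Fin d) (Fin d) ℂ) b k)
        • (mᴴ * n) a b) = ∑ a, ∑ b, ∑ p,
      (star ((π g : Matrix (Fin d) (Fin d) ℂ) a l) * (π g : Matrix (Fin d) (Fin d) ℂ) b k)
        • (star (m p a) * n p b) := by
    simp only [Matrix.mul_apply, Matrix.conjTranspose_apply, Finset.smul_sum]
  rw [L, R, rev3Aux]
  refine Finset.sum_congr rfl fun a _ => Finset.sum_congr rfl fun b _ =>
    Finset.sum_congr rfl fun p _ => ?_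
  rw [mul_comm]

private lemma starProdMemFAux (g : G) (m n : Matrix (Fin d) (Fin d) A)
    (hm : ∀ (g : G) (i j : Fin d), α g (m i j)
      = ∑ l, (π g : Matrix (Fin d) (Fin d) ℂ) l j • m i l)
    (hn : ∀ (g : G) (i j : Fin d), α g (n i j)
      = ∑ l, (π g : Matrix (Fin d) (Fin d) ℂ) l j • n i l)
    (i j : Fin d) :
    ∑ l, ∑ k, ((π g : Matrix (Fin d) (Fin d) ℂ) i l *
      star ((π g : Matrix (Fin d) (Fin d) ℂ) j k)) • α g ((mᴴ * n) l k) = (mᴴ * n) i j := by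
  have L : ∑ l, ∑ k, ((π g : Matrix (Fin d) (Fin d) ℂ) i l *
      star ((π g : Matrix (Fin d) (Fin d) ℂ) j k)) • α g ((mᴴ * n) l k)
      = ∑ l, ∑ k, ∑ a, ∑ b,
        (((π g : Matrix (Fin d) (Fin d) ℂ) i l * star ((π g : Matrix (Fin d) (Fin d) ℂ) a l)) *
         (star ((π g : Matrix (Fin d) (Fin d) ℂ) j k) * (π g : Matrix (Fin d) (Fin d) ℂ) b k))
          • (mᴴ * n) a b := by
    refine Finset.sum_congr rfl fun l _ => Finset.sum_congr rfl fun k _ => ?_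
    rw [expandStarMulAux π α g m n hm hn l k, Finset.smul_sum]
    refine Finset.sum_congr rfl fun a _ => ?_
    rw [Finset.smul_sum]
    refine Finset.sum_congr rfl fun b _ => ?_
    rw [smul_smul]
    ring_nf
  rw [L]
  exact quadCollapseAux _ _ i j (fun a => hU1Aux π g i a) (fun b => hU4Aux π g j b) _

private lemma alphaOfFAux (y : Matrix (Fin d) (Fin d) A)
    (hy : ∀ (g : G) (i j : Fin d),
      (∑ l, ∑ k, ((π g : Matrix (Fin d) (Fin d) ℂ) i l *
        star ((π g : Matrix (Fin d) (Fin d) ℂ) j k)) • α g (y l k)) = y i j)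
    (g : G) (a b : Fin d) :
    α g (y a b) = ∑ i, ∑ j,
      (star ((π g : Matrix (Fin d) (Fin d) ℂ) i a) * (π g : Matrix (Fin d) (Fin d) ℂ) j b)
        • y i j := by
  have key : ∑ i, ∑ j, ∑ l, ∑ k,
      ((star ((π g : Matrix (Fin d) (Fin d) ℂ) i a) * (π g : Matrix (Fin d) (Fin d) ℂ) i l) *
       ((π g : Matrix (Fin d) (Fin d) ℂ) j b * star ((π g : Matrix (Fin d) (Fin d) ℂ) j k)))
        • α g (y l k)
      = α g (y a b) :=
    quadCollapseAux _ _ a b (fun l => hU2Aux π g a l) (fun k => hU3Aux π g b k) _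
  rw [← key]
  refine Finset.sum_congr rfl fun i _ => Finset.sum_congr rfl fun j _ => ?_
  rw [← hy g i j, Finset.smul_sum]
  refine Finset.sum_congr rfl fun l _ => ?_
  rw [Finset.smul_sum]
  refine Finset.sum_congr rfl fun k _ => ?_
  rw [smul_smul]
  ring_nf

private lemma mulA2Aux (g : G) (n y : Matrix (Fin d) (Fin d) A)
    (hn : ∀ (g : G) (i j : Fin d), α g (n i j)
      = ∑ l, (π g : Matrix (Fin d) (Fin d) ℂ) l j • n i l)
    (hy : ∀ (g : G) (a b : Fin d), α g (y a b) = ∑ i, ∑ j,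
      (star ((π g : Matrix (Fin d) (Fin d) ℂ) i a) * (π g : Matrix (Fin d) (Fin d) ℂ) j b)
        • y i j)
    (i j : Fin d) : α g ((n * y) i j)
      = ∑ l, (π g : Matrix (Fin d) (Fin d) ℂ) l j • (n * y) i l := by
  have L : α g ((n * y) i j) = ∑ p, ∑ c, ∑ b, ∑ a,
      (((π g : Matrix (Fin d) (Fin d) ℂ) a p * star ((π g : Matrix (Fin d) (Fin d) ℂ) c p)) *
        (π g : Matrix (Fin d) (Fin d) ℂ) b j) • (n i a * y c b) := by
    simp only [Matrix.mul_apply, map_sum, map_mul, hn, hy, Finset.sum_mul, Finset.mul_sum,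
      smul_mul_assoc, mul_smul_comm, smul_smul, Finset.smul_sum]
    refine Finset.sum_congr rfl fun p _ => Finset.sum_congr rfl fun c _ =>
      Finset.sum_congr rfl fun b _ => Finset.sum_congr rfl fun a _ => ?_
    rw [show star ((π g : Matrix (Fin d) (Fin d) ℂ) c p) * (π g : Matrix (Fin d) (Fin d) ℂ) b j
        * (π g : Matrix (Fin d) (Fin d) ℂ) a p
      = ((π g : Matrix (Fin d) (Fin d) ℂ) a p * star ((π g : Matrix (Fin d) (Fin d) ℂ) c p)) *
        (π g : Matrix (Fin d) (Fin d) ℂ) b j by ring]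
  rw [L, collapsePAux _ _ _ (fun c a => hU1Aux π g a c)]
  simp only [Matrix.mul_apply, Finset.smul_sum]

private lemma starFAux (y : Matrix (Fin d) (Fin d) A)
    (hy : ∀ (g : G) (i j : Fin d),
      (∑ l, ∑ k, ((π g : Matrix (Fin d) (Fin d) ℂ) i l *
        star ((π g : Matrix (Fin d) (Fin d) ℂ) j k)) • α g (y l k)) = y i j)
    (g : G) (i j : Fin d) :
    ∑ l, ∑ k, ((π g : Matrix (Fin d) (Fin d) ℂ) i l *
      star ((π g : Matrix (Fin d) (Fin d) ℂ) j k)) • α g (yᴴ l k) = yᴴ i j := by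
  calc ∑ l, ∑ k, ((π g : Matrix (Fin d) (Fin d) ℂ) i l *
        star ((π g : Matrix (Fin d) (Fin d) ℂ) j k)) • α g (yᴴ l k)
      = ∑ l, ∑ k, (star ((π g : Matrix (Fin d) (Fin d) ℂ) j l) *
          (π g : Matrix (Fin d) (Fin d) ℂ) i k) • α g (yᴴ k l) := by
        rw [Finset.sum_comm]
        exact Finset.sum_congr rfl fun l _ => Finset.sum_congr rfl fun k _ => by rw [mul_comm]
    _ = star (∑ l, ∑ k, ((π g : Matrix (Fin d) (Fin d) ℂ) j l *
          star ((π g : Matrix (Fin d) (Fin d) ℂ) i k)) • α g (y l k)) := by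
        simp [star_sum, star_smul, star_mul', Matrix.conjTranspose_apply, map_star]
    _ = star (y j i) := by rw [hy g j i]
    _ = yᴴ i j := (Matrix.conjTranspose_apply ..).symm

end SpectralSubspaceAux

/-- For a C*-dynamical system `(A, G, α)` with `G` compact and a finite-dimensional
unitary representation `π` of `G`, with
`A₂(π) = { m : Matrix over A | (α_g ⊗ id)(m) = m (1 ⊗ π g) for all g }`,
the products `mᴴ * n` with `m, n ∈ A₂(π)` lie in the fixed-point algebra of the
action `g ↦ α_g ⊗ Ad π(g)`, and their linear span is a two-sided ideal of that
fixed-point algebra. -/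
theorem spectral_subspace_star_products_ideal_of_adjoint_fixedPoint
    {G A : Type*} [Group G] [TopologicalSpace G] [IsTopologicalGroup G] [CompactSpace G]
    [NonUnitalCStarAlgebra A]
    (α : G → (A ≃⋆ₐ[ℂ] A))
    (hα : ∀ g h a, α (g * h) a = α g (α h a))
    (hcont : ∀ a : A, Continuous fun g => α g a)
    (d : ℕ) (π : G →* Matrix.unitaryGroup (Fin d) ℂ)
    (hπcont : Continuous fun g => (π g : Matrix (Fin d) (Fin d) ℂ))
    -- the spectral subspace `A₂(π)`
    (A₂ : Set (Matrix (Fin d) (Fin d) A))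
    (hA₂ : A₂ = {m | ∀ g : G, m.map (α g) =
      Matrix.of fun i j => ∑ l, (π g : Matrix (Fin d) (Fin d) ℂ) l j • m i l})
    -- the fixed-point algebra of `g ↦ α_g ⊗ Ad π(g)`;  `(α_g ⊗ Ad π(g))(m) = m`
    -- reads entrywise as `Σ_{l,k} π(g)_{il} conj(π(g)_{jk}) • α_g(m_{lk}) = m_{ij}`.
    (F : Set (Matrix (Fin d) (Fin d) A))
    (hF : F = {m | ∀ (g : G) (i j : Fin d),
      (∑ l, ∑ k, ((π g : Matrix (Fin d) (Fin d) ℂ) i l *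
        star ((π g : Matrix (Fin d) (Fin d) ℂ) j k)) • α g (m l k)) = m i j})
    -- the span of products `mᴴ * n`
    (J : Submodule ℂ (Matrix (Fin d) (Fin d) A))
    (hJ : J = Submodule.span ℂ {x | ∃ m ∈ A₂, ∃ n ∈ A₂, x = mᴴ * n}) :
    (∀ m ∈ A₂, ∀ n ∈ A₂, mᴴ * n ∈ F) ∧
    (∀ x ∈ J, x ∈ F) ∧
    (∀ x ∈ J, ∀ y ∈ F, x * y ∈ J ∧ y * x ∈ J) := by
  -- pointwise reformulation of membership in `A₂`
  have memA₂ : ∀ m : Matrix (Fin d) (Fin d) A, m ∈ A₂ ↔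
      ∀ (g : G) (i j : Fin d), α g (m i j)
        = ∑ l, (π g : Matrix (Fin d) (Fin d) ℂ) l j • m i l := by
    intro m
    rw [hA₂]
    constructor
    · intro hm g i j
      have h2 := hm g
      rw [← Matrix.ext_iff] at h2
      simpa [Matrix.map_apply] using h2 i j
    · intro hm g
      ext i j
      simpa [Matrix.map_apply] using hm g i j
  have memF : ∀ m : Matrix (Fin d) (Fin d) A, m ∈ F ↔
      ∀ (g : G) (i j : Fin d),
        (∑ l, ∑ k, ((π g : Matrix (Fin d) (Fin d) ℂ) i l *
          star ((π g : Matrix (Fin d) (Fin d) ℂ) j k)) • α g (m l k)) = m i j := by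
    intro m; rw [hF]; rfl
  -- part 1
  have part1 : ∀ m ∈ A₂, ∀ n ∈ A₂, mᴴ * n ∈ F := by
    intro m hm n hn
    rw [memF]
    intro g i j
    exact starProdMemFAux π α g m n ((memA₂ m).1 hm) ((memA₂ n).1 hn) i j
  -- `F` is closed under the module operations
  have Fzero : (0 : Matrix (Fin d) (Fin d) A) ∈ F := by
    rw [memF]; intro g i j; simp
  have Fadd : ∀ x y : Matrix (Fin d) (Fin d) A, x ∈ F → y ∈ F → x + y ∈ F := by
    intro x y hx hy
    rw [memF] at hx hy ⊢
    intro g i j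
    have := congrArg₂ (· + ·) (hx g i j) (hy g i j)
    simpa [Matrix.add_apply, map_add, smul_add, Finset.sum_add_distrib] using this
  have Fsmul : ∀ (c : ℂ) (x : Matrix (Fin d) (Fin d) A), x ∈ F → c • x ∈ F := by
    intro c x hx
    rw [memF] at hx ⊢
    intro g i j
    have := congrArg (c • ·) (hx g i j)
    simpa [Matrix.smul_apply, map_smul, Finset.smul_sum, smul_comm c] using this
  -- part 2
  have part2 : ∀ x ∈ J, x ∈ F := by
    intro x hx
    rw [hJ] at hx
    refine Submodule.span_induction ?_ Fzero (fun a b _ _ ha hb => Fadd a b ha hb)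
      (fun c a _ ha => Fsmul c a ha) hx
    rintro z ⟨m, hm, n, hn, rfl⟩
    exact part1 m hm n hn
  refine ⟨part1, part2, ?_⟩
  -- part 3
  intro x hx y hy
  have hyF := (memF y).1 hy
  have hyα := alphaOfFAux π α y hyF
  have hyHF : ∀ (g : G) (i j : Fin d),
      (∑ l, ∑ k, ((π g : Matrix (Fin d) (Fin d) ℂ) i l *
        star ((π g : Matrix (Fin d) (Fin d) ℂ) j k)) • α g (yᴴ l k)) = yᴴ i j :=
    starFAux π α y hyF
  have hyHα := alphaOfFAux π α yᴴ hyHF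
  rw [hJ] at hx ⊢
  refine Submodule.span_induction ?_ ?_ ?_ ?_ hx
  · rintro z ⟨m, hm, n, hn, rfl⟩
    constructor
    · refine Submodule.subset_span ⟨m, hm, n * y, ?_, Matrix.mul_assoc _ _ _⟩
      rw [memA₂]
      exact fun g i j => mulA2Aux π α g n y ((memA₂ n).1 hn) hyα i j
    · refine Submodule.subset_span ⟨m * yᴴ, ?_, n, hn, ?_⟩
      · rw [memA₂]
        exact fun g i j => mulA2Aux π α g m yᴴ ((memA₂ m).1 hm) hyHα i j
      · rw [Matrix.conjTranspose_mul, Matrix.conjTranspose_conjTranspose, Matrix.mul_assoc]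
  · simp
  · rintro a b _ _ ⟨ha1, ha2⟩ ⟨hb1, hb2⟩
    constructor
    · rw [add_mul]; exact Submodule.add_mem _ ha1 hb1
    · rw [mul_add]; exact Submodule.add_mem _ ha2 hb2
  · rintro c a _ ⟨ha1, ha2⟩
    constructor
    · rw [smul_mul_assoc]; exact Submodule.smul_mem _ c ha1
    · rw [mul_smul_comm]; exact Submodule.smul_mem _ c ha2
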